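/- Assume the abc conjecture with ε = 1/2 and constant C: every coprime triple a + b = c satisfies c ≤ C·rad(abc)^(3/2). Then the equation x^k + y^m = z^n in coprime positive integers x, y, z ≥ 2 with 1/k + 1/m + 1/n < 1/2 has max(x^k, y^m, z^n) bounded by a constant depending only on C. -/

import Mathlib

/-- The radical of a positive integer: the product of its distinct prime factors. -/
def rad (n : ℕ) : ℕ := ∏ p ∈ n.primeFactors, p

lemma root_le {a : ℕ} {k : ℕ} (hk : 0 < k) {M : ℝ} (hM : 0 ≤ M)
    (h : ((a ^ k : ℕ) : ℝ) ≤ M) : (a : ℝ) ≤ M ^ ((1 : ℝ) / k) := by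
  have ha : (0:ℝ) ≤ (a:ℝ) := Nat.cast_nonneg a
  have hk' : (k : ℝ) ≠ 0 := Nat.cast_ne_zero.mpr hk.ne'
  have : ((a:ℝ) ^ (k:ℝ)) ^ ((1:ℝ)/k) = (a:ℝ) := by
    rw [← Real.rpow_mul ha, mul_one_div, div_self hk', Real.rpow_one]
  rw [← this]
  apply Real.rpow_le_rpow (by positivity) _ (by positivity)
  rwa [Real.rpow_natCast, ← Nat.cast_pow]

theorem stmt_15 (C : ℝ) (hC : 0 < C)
    (abc : ∀ a b c : ℕ, 0 < a → 0 < b → a + b = c → Nat.gcd a b = 1 →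
      (c : ℝ) ≤ C * (rad (a * b * c) : ℝ) ^ ((3 : ℝ) / 2)) :
    ∃ B : ℝ, ∀ x y z k m n : ℕ, 2 ≤ x → 2 ≤ y → 2 ≤ z →
      0 < k → 0 < m → 0 < n →
      Nat.gcd x y = 1 →
      (1 : ℝ) / k + 1 / m + 1 / n < 1 / 2 →
      x ^ k + y ^ m = z ^ n →
      (max (x ^ k) (max (y ^ m) (z ^ n)) : ℝ) ≤ B := by
  refine ⟨C ^ (4 : ℕ), ?_⟩
  intro x y z k m n hx hy hz hk hm hn hxy hs heq
  have hx0 : 0 < x := by omega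
  have hy0 : 0 < y := by omega
  have hz0 : 0 < z := by omega
  have hxk : 0 < x ^ k := Nat.pow_pos hx0
  have hym : 0 < y ^ m := Nat.pow_pos hy0
  have hzn : 0 < z ^ n := Nat.pow_pos hz0
  set M : ℝ := ((z ^ n : ℕ) : ℝ) with hMdef
  have hM1 : (1:ℝ) ≤ M := by
    rw [hMdef]; exact_mod_cast hzn
  have hM0 : (0:ℝ) ≤ M := by linarith
  -- coprimality of powers
  have hcop : Nat.Coprime x y := hxy
  have hcop' : Nat.gcd (x ^ k) (y ^ m) = 1 := Nat.Coprime.pow k m hcop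
  have habc := abc (x ^ k) (y ^ m) (z ^ n) hxk hym heq hcop'
  -- radical bound
  have hpf : (x ^ k * y ^ m * z ^ n).primeFactors = (x * y * z).primeFactors := by
    rw [Nat.primeFactors_mul (Nat.mul_ne_zero hxk.ne' hym.ne') hzn.ne',
        Nat.primeFactors_mul hxk.ne' hym.ne',
        Nat.primeFactors_mul (Nat.mul_ne_zero hx0.ne' hy0.ne') hz0.ne',
        Nat.primeFactors_mul hx0.ne' hy0.ne',
        Nat.primeFactors_pow _ hk.ne', Nat.primeFactors_pow _ hm.ne',
        Nat.primeFactors_pow _ hn.ne']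
  have hraddvd : rad (x ^ k * y ^ m * z ^ n) ∣ x * y * z := by
    rw [rad, hpf]; exact Nat.prod_primeFactors_dvd _
  have hradle : (rad (x ^ k * y ^ m * z ^ n) : ℝ) ≤ ((x * y * z : ℕ) : ℝ) := by
    exact_mod_cast Nat.le_of_dvd (by positivity) hraddvd
  -- each factor bounded by M^(1/·)
  have hxle : ((x ^ k : ℕ) : ℝ) ≤ M := by
    rw [hMdef]; exact_mod_cast (by omega : x ^ k ≤ z ^ n)
  have hyle : ((y ^ m : ℕ) : ℝ) ≤ M := by
    rw [hMdef]; exact_mod_cast (by omega : y ^ m ≤ z ^ n)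
  have hzle : ((z ^ n : ℕ) : ℝ) ≤ M := le_refl _
  have hxM := root_le hk hM0 hxle
  have hyM := root_le hm hM0 hyle
  have hzM := root_le hn hM0 hzle
  have hprod : ((x * y * z : ℕ) : ℝ) ≤ M ^ ((1:ℝ)/k + 1/m + 1/n) := by
    push_cast
    rw [Real.rpow_add (by linarith), Real.rpow_add (by linarith)]
    have h1 : (0:ℝ) ≤ M ^ ((1:ℝ)/k) := Real.rpow_nonneg hM0 _
    have h2 : (0:ℝ) ≤ M ^ ((1:ℝ)/m) := Real.rpow_nonneg hM0 _
    exact mul_le_mul (mul_le_mul hxM hyM (Nat.cast_nonneg y) h1) hzM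
      (Nat.cast_nonneg z) (mul_nonneg h1 h2)
  -- combine
  have hstep : (rad (x ^ k * y ^ m * z ^ n) : ℝ) ^ ((3:ℝ)/2) ≤ M ^ ((3:ℝ)/4) := by
    calc (rad (x ^ k * y ^ m * z ^ n) : ℝ) ^ ((3:ℝ)/2)
        ≤ (M ^ ((1:ℝ)/k + 1/m + 1/n)) ^ ((3:ℝ)/2) := by
          apply Real.rpow_le_rpow (Nat.cast_nonneg _) (le_trans hradle hprod) (by norm_num)
      _ = M ^ (((1:ℝ)/k + 1/m + 1/n) * (3/2)) := (Real.rpow_mul hM0 _ _).symm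
      _ ≤ M ^ ((3:ℝ)/4) := by
          apply Real.rpow_le_rpow_of_exponent_le hM1
          nlinarith
  have hMle : M ≤ C * M ^ ((3:ℝ)/4) := le_trans habc (by
    have := mul_le_mul_of_nonneg_left hstep hC.le
    linarith)
  have hM34 : (0:ℝ) < M ^ ((3:ℝ)/4) := Real.rpow_pos_of_pos (by linarith) _
  have hquarter : M ^ ((1:ℝ)/4) ≤ C := by
    have hsplit : M = M ^ ((1:ℝ)/4) * M ^ ((3:ℝ)/4) := by
      rw [← Real.rpow_add (by linarith)]; norm_num
    nth_rewrite 1 [hsplit] at hMle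
    exact le_of_mul_le_mul_right hMle hM34
  have hfin : M ≤ C ^ (4:ℕ) := by
    have h0 : (0:ℝ) ≤ M ^ ((1:ℝ)/4) := Real.rpow_nonneg hM0 _
    calc M = (M ^ ((1:ℝ)/4)) ^ (4:ℕ) := by
              rw [← Real.rpow_natCast (M ^ ((1:ℝ)/4)) 4, ← Real.rpow_mul hM0]
              norm_num
      _ ≤ C ^ (4:ℕ) := pow_le_pow_left₀ h0 hquarter 4
  apply max_le
  · rw [← Nat.cast_pow]; exact hxle.trans hfin
  apply max_le
  · rw [← Nat.cast_pow]; exact hyle.trans hfin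
  · rw [← Nat.cast_pow]; exact hzle.trans hfin
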